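/- Let F be a field of characteristic 2, let p = x^d + p₁x^{d-1} + … + p_d ∈ F[x] be a monic irreducible polynomial of degree d that is inseparable (i.e., its formal derivative is zero, equivalently p_k = 0 for all odd k), let L = F[x]/(p), and let t_p : L → F be the F-linear map with t_p(x^j) = 0 for 0 ≤ j ≤ d-2 and t_p(x^{d-1}) = 1. Then for every b ∈ F and every integer k ≥ 0, the Scharlau transfer t_p∘[1, bx^k] (a quadratic form of dimension 2d over F) is Witt equivalent to the zero form; that is, there exist natural numbers r, s such that (t_p∘[1, bx^k]) ⊥ H^{⊥r} is isometric to H^{⊥s}. -/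

import Mathlib

open QuadraticMap Polynomial

/-- The binary quadratic form `[a,b] : (u,v) ↦ a u² + u v + b v²` over `K`. -/
noncomputable def binQF (K : Type*) [CommRing K] (a b : K) : QuadraticForm K (K × K) :=
  a • QuadraticMap.linMulLin (LinearMap.fst K K K) (LinearMap.fst K K K)
    + QuadraticMap.linMulLin (LinearMap.fst K K K) (LinearMap.snd K K K)
    + b • QuadraticMap.linMulLin (LinearMap.snd K K K) (LinearMap.snd K K K)

/-- The hyperbolic plane `(u,v) ↦ u v` over `K`. -/
noncomputable def hypQF (K : Type*) [CommRing K] : QuadraticForm K (K × K) :=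
  QuadraticMap.linMulLin (LinearMap.fst K K K) (LinearMap.snd K K K)

/-- The orthogonal sum of `r` copies of the hyperbolic plane over `K`. -/
noncomputable def hypPow (K : Type*) [CommRing K] (r : ℕ) : QuadraticForm K (Fin r → K × K) :=
  QuadraticMap.pi fun _ => hypQF K

/-- Witt equivalence of quadratic forms over `K`: `Q₁ ⊥ H^{⊥r}` is isometric to
`Q₂ ⊥ H^{⊥s}` for some `r, s`. -/
def WittEquiv {K : Type*} [CommRing K] {V₁ V₂ : Type*} [AddCommGroup V₁] [Module K V₁]
    [AddCommGroup V₂] [Module K V₂]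
    (Q₁ : QuadraticForm K V₁) (Q₂ : QuadraticForm K V₂) : Prop :=
  ∃ r s : ℕ, (Q₁.prod (hypPow K r)).Equivalent (Q₂.prod (hypPow K s))

/-- The Scharlau transfer of a quadratic form `Q` over `L` along an `F`-linear functional
`t : L → F`: the quadratic form `t ∘ Q` over `F` on `V` viewed as an `F`-vector space. -/
noncomputable def scharlauTransfer {F L : Type*} [Field F] [CommRing L] [Algebra F L]
    (V : Type*) [AddCommGroup V] [Module L V] [Module F V] [IsScalarTower F L V]
    (t : L →ₗ[F] F) (Q : QuadraticForm L V) : QuadraticForm F V :=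
  t.compQuadraticMap' Q


/-- Auxiliary: pointwise product splitting of `Fin d → F × F`. -/
noncomputable def pprodAuxWitt (F : Type*) [CommRing F] (d : ℕ) :
    (Fin d → F × F) ≃ₗ[F] (Fin d → F) × (Fin d → F) :=
  LinearEquiv.ofLinear
    (((LinearMap.fst F F F).compLeft (Fin d)).prod ((LinearMap.snd F F F).compLeft (Fin d)))
    (LinearMap.pi fun i => ((LinearMap.proj i).comp (LinearMap.fst F _ _)).prod
      ((LinearMap.proj i).comp (LinearMap.snd F _ _)))
    (by ext ⟨x, y⟩ <;> rfl)
    (by ext c i <;> rfl)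

/-- Auxiliary: the shear `(u, v) ↦ (u + c v, v)` in characteristic 2. -/
noncomputable def shearAuxWitt (F L : Type*) [Field F] [CommRing L] [Algebra F L] [CharP L 2]
    (c : L) : (L × L) ≃ₗ[F] (L × L) :=
  letI f : (L × L) →ₗ[F] (L × L) :=
    (LinearMap.fst F L L + (LinearMap.mulLeft F c).comp (LinearMap.snd F L L)).prod
      (LinearMap.snd F L L)
  LinearEquiv.ofLinear f f
    (by
      refine LinearMap.ext fun x => ?_
      obtain ⟨u, v⟩ := x
      simp [f, add_assoc, CharTwo.add_self_eq_zero])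
    (by
      refine LinearMap.ext fun x => ?_
      obtain ⟨u, v⟩ := x
      simp [f, add_assoc, CharTwo.add_self_eq_zero])

/-- For `p` monic irreducible and inseparable (zero formal derivative) over a field `F` of
characteristic `2`, the Scharlau transfer of `[1, b·x^k]` is Witt equivalent to the zero form:
`(t_p ∘ [1, b·x^k]) ⊥ H^{⊥r}` is isometric to `H^{⊥s}` for some `r, s`. -/
theorem transfer_one_bx_pow_inseparable_isWittTrivial
    (F : Type*) [Field F] [CharP F 2] (p : Polynomial F)
    (hmonic : p.Monic) (hirr : Irreducible p) (hinsep : Polynomial.derivative p = 0)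
    (d : ℕ) (hd : p.natDegree = d)
    (t : AdjoinRoot p →ₗ[F] F)
    (ht : ∀ j : ℕ, j < d → t (AdjoinRoot.root p ^ j) = if j = d - 1 then 1 else 0)
    (b : F) (k : ℕ) :
    ∃ r s : ℕ,
      ((scharlauTransfer _ t
        (binQF (AdjoinRoot p) 1
          (algebraMap F (AdjoinRoot p) b * AdjoinRoot.root p ^ k))).prod
            (hypPow F r)).Equivalent (hypPow F s) := by
  haveI : Fact (Irreducible p) := ⟨hirr⟩
  set L := AdjoinRoot p with hL
  haveI : CharP L 2 := charP_of_injective_algebraMap (algebraMap F L).injective 2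
  set x := AdjoinRoot.root p with hx
  -- basic numerology
  have hd1 : 1 ≤ d := hd ▸ hirr.natDegree_pos
  have hodd : ∀ j, Odd j → p.coeff j = 0 := by
    intro j hj
    obtain ⟨c, rfl⟩ := hj
    have h := congrArg (fun q => Polynomial.coeff q (2*c)) hinsep
    simp only [coeff_derivative, coeff_zero] at h
    have hne : ((2*c : ℕ) : F) + 1 ≠ 0 := by
      have h2 : ¬ (2 ∣ (2*c + 1)) := by omega
      have := (CharP.cast_eq_zero_iff F 2 (2*c+1)).not.mpr h2
      push_cast at this ⊢
      exact this
    exact (mul_eq_zero.mp h).resolve_right hne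
  have heven : 2 ∣ d := by
    by_contra h
    have hh : Odd d := Nat.odd_iff.mpr (by omega)
    have h0 := hodd _ hh
    rw [← hd, hmonic.coeff_natDegree] at h0
    exact one_ne_zero h0
  -- the expansion of x ^ d
  have hroot : x ^ d = ∑ i ∈ Finset.range d, p.coeff i • x ^ i := by
    have h0 : (Polynomial.aeval x) p = 0 := by
      rw [Polynomial.aeval_def, AdjoinRoot.algebraMap_eq]
      exact AdjoinRoot.eval₂_root p
    have hcd : p.coeff d = 1 := by rw [← hd]; exact hmonic.coeff_natDegree
    rw [Polynomial.aeval_eq_sum_range, hd, Finset.sum_range_succ, hcd, one_smul] at h0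
    have h1 := CharTwo.add_eq_iff_eq_add.mp h0
    rw [zero_add] at h1
    exact h1.symm
  -- Lemma A : t kills even powers of x
  have hA : ∀ m : ℕ, t (x ^ (2*m)) = 0 := by
    intro m
    induction m using Nat.strong_induction_on with
    | _ m ih =>
      rcases lt_or_ge (2*m) d with h | h
      · rw [ht _ h, if_neg]
        obtain ⟨e, he⟩ := heven
        omega
      · have hexp : x ^ (2*m) = ∑ i ∈ Finset.range d, p.coeff i • x ^ (2*m - d + i) := by
          have hh : x ^ (2*m) = x ^ (2*m - d) * x ^ d := by
            rw [← pow_add, Nat.sub_add_cancel h]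
          rw [hh, hroot, Finset.mul_sum]
          refine Finset.sum_congr rfl fun i _ => ?_
          rw [mul_smul_comm, ← pow_add]
        rw [hexp, map_sum]
        refine Finset.sum_eq_zero fun i hi => ?_
        rw [_root_.map_smul]
        rcases Nat.even_or_odd i with hie | hio
        · obtain ⟨i', rfl⟩ := hie
          obtain ⟨e, he⟩ := heven
          have h2 : 2*m - d + (i' + i') = 2 * (m - e + i') := by omega
          have h3 : m - e + i' < m := by
            have := Finset.mem_range.mp hi; omega
          rw [h2, ih _ h3, smul_zero]
        · rw [hodd i hio, zero_smul]
  -- Lemma A' : t kills all squares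
  set pb := AdjoinRoot.powerBasis (K := F) hmonic.ne_zero with hpb
  haveI : FiniteDimensional F L := Module.Finite.of_basis pb.basis
  have hA' : ∀ w : L, t (w * w) = 0 := by
    intro w
    have hw : w = ∑ i, pb.basis.repr w i • pb.basis i := (pb.basis.sum_repr w).symm
    rw [hw, CharTwo.sum_mul_self, map_sum]
    refine Finset.sum_eq_zero fun i _ => ?_
    rw [smul_mul_smul_comm, _root_.map_smul, PowerBasis.coe_basis, AdjoinRoot.powerBasis_gen,
      ← pow_add, smul_eq_mul]
    have h2i : (i : ℕ) + i = 2 * i := by omega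
    rw [h2i, hA, mul_zero]
  -- dual bases
  have hdim : pb.dim = d := by rw [AdjoinRoot.powerBasis_dim, hd]
  set eb : Module.Basis (Fin d) F L := pb.basis.reindex (finCongr hdim) with heb
  set B : L →ₗ[F] Module.Dual F L := (LinearMap.mul F L).compr₂ t with hB
  have hBapp : ∀ u v : L, B u v = t (u * v) := fun u v => rfl
  have hinj : Function.Injective B := by
    rw [injective_iff_map_eq_zero]
    intro u hu
    by_contra hu0
    have h1 : t (x ^ (d-1)) = 0 := by
      have h2 := congrArg (fun f => f (u⁻¹ * x ^ (d-1))) hu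
      simp only [hBapp, LinearMap.zero_apply] at h2
      rwa [← mul_assoc, mul_inv_cancel₀ hu0, one_mul] at h2
    rw [ht _ (by omega), if_pos rfl] at h1
    exact one_ne_zero h1
  set Bequiv : L ≃ₗ[F] Module.Dual F L :=
    LinearEquiv.ofBijective B ⟨hinj, (LinearMap.injective_iff_surjective_of_finrank_eq_finrank
      (Subspace.dual_finrank_eq).symm).mp hinj⟩ with hBe
  set fb : Module.Basis (Fin d) F L := (eb.dualBasis).map Bequiv.symm with hfb
  have hte : ∀ i j : Fin d, t (eb i * fb j) = if i = j then 1 else 0 := by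
    intro i j
    have h1 : t (eb i * fb j) = B (fb j) (eb i) := by rw [hBapp, mul_comm]
    rw [h1, hfb, Module.Basis.map_apply]
    have h2 : B (Bequiv.symm (eb.dualBasis j)) = eb.dualBasis j :=
      Bequiv.apply_symm_apply (eb.dualBasis j)
    rw [h2, Module.Basis.dualBasis_apply_self]
  -- the multiplier
  set c₀ : L := algebraMap F L b * x ^ k with hc₀
  set Q : QuadraticForm F (L × L) :=
    scharlauTransfer _ t (binQF L 1 c₀) with hQ
  -- the total isometry
  set Φ : (Fin d → F × F) ≃ₗ[F] L × L :=
    (pprodAuxWitt F d).trans ((eb.equivFun.symm.prodCongr fb.equivFun.symm).trans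
      (shearAuxWitt F L c₀)) with hΦ
  have hΦapp : ∀ c : Fin d → F × F,
      Φ c = ((∑ i, (c i).1 • eb i) + c₀ * (∑ i, (c i).2 • fb i), ∑ i, (c i).2 • fb i) := by
    intro c
    show shearAuxWitt F L c₀
      ((eb.equivFun.symm.prodCongr fb.equivFun.symm) (pprodAuxWitt F d c)) = _
    have h1 : (pprodAuxWitt F d c) = (fun i => (c i).1, fun i => (c i).2) := rfl
    rw [h1]
    have h2 : (eb.equivFun.symm.prodCongr fb.equivFun.symm)
        ((fun i => (c i).1, fun i => (c i).2) : (Fin d → F) × (Fin d → F))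
        = (∑ i, (c i).1 • eb i, ∑ i, (c i).2 • fb i) := by
      show (eb.equivFun.symm (fun i => (c i).1), fb.equivFun.symm (fun i => (c i).2)) = _
      rw [Module.Basis.equivFun_symm_apply, Module.Basis.equivFun_symm_apply]
    rw [h2]
    rfl
  have hQapp : ∀ u v : L, Q (u, v) = t (u * u + u * v + c₀ * (v * v)) := by
    intro u v
    show t ((binQF L 1 c₀) (u, v)) = _
    congr 1
    show (1 : L) • (u * u) + u * v + c₀ • (v * v) = _
    rw [one_smul, smul_eq_mul]
  have hmap : ∀ c : Fin d → F × F, Q (Φ c) = (hypPow F d) c := by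
    intro c
    set U : L := ∑ i, (c i).1 • eb i with hU
    set V : L := ∑ i, (c i).2 • fb i with hV
    rw [hΦapp c, hQapp]
    have h1 : (U + c₀ * V) * (U + c₀ * V) = U * U + (c₀ * V) * (c₀ * V) :=
      CharTwo.add_mul_self U (c₀ * V)
    have h2 : (U + c₀ * V) * V = U * V + c₀ * V * V := by ring
    rw [h1, h2]
    have h3 : t (U * U + c₀ * V * (c₀ * V) + (U * V + c₀ * V * V) + c₀ * (V * V))
        = t (U * V) := by
      rw [map_add, map_add, map_add, map_add, hA' U, hA' (c₀ * V), mul_assoc c₀ V V,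
        zero_add, zero_add, add_assoc, CharTwo.add_self_eq_zero, add_zero]
    rw [h3]
    have h5 : U * V = ∑ i, ∑ j, ((c i).1 * (c j).2) • (eb i * fb j) := by
      rw [hU, hV, Finset.sum_mul_sum]
      exact Finset.sum_congr rfl fun i _ => Finset.sum_congr rfl fun j _ =>
        (smul_mul_smul_comm _ _ _ _)
    rw [h5, map_sum]
    have h6 : ∀ i : Fin d, t (∑ j, ((c i).1 * (c j).2) • (eb i * fb j))
        = (c i).1 * (c i).2 := by
      intro i
      rw [map_sum]
      have h7 : ∀ j : Fin d, (((c i).1 * (c j).2) • t (eb i * fb j))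
          = if i = j then (c i).1 * (c j).2 else 0 := by
        intro j
        rw [hte i j, smul_eq_mul, mul_ite, mul_one, mul_zero]
      calc (∑ j, t (((c i).1 * (c j).2) • (eb i * fb j)))
          = ∑ j, if i = j then (c i).1 * (c j).2 else 0 := by
            refine Finset.sum_congr rfl fun j _ => ?_
            rw [_root_.map_smul, h7 j]
        _ = (c i).1 * (c i).2 := by rw [Finset.sum_ite_eq (Finset.univ) i
              (fun j => (c i).1 * (c j).2) , if_pos (Finset.mem_univ i)]
    have h8 : (hypPow F d) c = ∑ i, (c i).1 * (c i).2 := by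
      rw [hypPow, QuadraticMap.pi_apply]
      rfl
    rw [h8]
    exact Finset.sum_congr rfl fun i _ => h6 i
  -- assemble
  refine ⟨0, d, ?_⟩
  have J : (hypPow F d).IsometryEquiv Q := ⟨Φ, hmap⟩
  set e0 : ((L × L) × (Fin 0 → F × F)) ≃ₗ[F] L × L :=
    LinearEquiv.ofLinear (LinearMap.fst F _ _) (LinearMap.inl F _ _)
      (by ext z <;> rfl)
      (by
        refine LinearMap.ext fun z => ?_
        obtain ⟨w, m⟩ := z
        refine Prod.ext rfl ?_
        funext i
        exact i.elim0)
  have J0 : (Q.prod (hypPow F 0)).IsometryEquiv Q := by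
    refine ⟨e0, fun m => ?_⟩
    obtain ⟨w, z⟩ := m
    show Q w = Q.prod (hypPow F 0) (w, z)
    rw [QuadraticMap.prod_apply]
    have : (hypPow F 0) z = 0 := by
      rw [hypPow, QuadraticMap.pi_apply]
      simp
    rw [this, add_zero]
  exact ⟨J0.trans J.symm⟩
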